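/- The map sending t to s^{-1}(s-1)^2 = s - 2 + s^{-1} and u to s - s^{-1} extends to a well-defined isomorphism of ℂ-algebras from R to S, whose inverse φ satisfies φ(s) = (t + 2 + u)/2, φ(s^{-1}) = (t + 2 - u)/2, and φ((s-1)^{-1}) = (t^{-1}u - 1)/2. -/

import Mathlib

noncomputable section

set_option synthInstance.maxHeartbeats 1000000
set_option maxHeartbeats 1000000

open Polynomial

/-- The polynomial `u² - (t² + 4t)` over the Laurent polynomial ring `ℂ[t,t⁻¹]`. -/
def threePoly : Polynomial (LaurentPolynomial ℂ) :=
  Polynomial.X ^ 2 - Polynomial.C (LaurentPolynomial.T 2 + 4 * LaurentPolynomial.T 1)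

/-- The three-point ring `R = ℂ[t, t⁻¹, u | u² = t² + 4t]`, i.e. the quotient of
`ℂ[t,t⁻¹][u]` by the ideal generated by `u² - t² - 4t`. -/
abbrev R3 : Type := AdjoinRoot threePoly

/-- `t^k` in `R3`, for `k : ℤ`. -/
def tp (k : ℤ) : R3 := AdjoinRoot.of threePoly (LaurentPolynomial.T k)

/-- the element `t` of `R`. -/
def tR : R3 := tp 1

/-- the element `t⁻¹` of `R`. -/
def tInv : R3 := tp (-1)

/-- the element `u` of `R`. -/
def uR : R3 := AdjoinRoot.root threePoly

/-- The three-point ring `S = ℂ[s, s⁻¹, (s-1)⁻¹]`, realized as the subalgebra of the field of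
rational functions `ℂ(s)` generated by `s`, `s⁻¹` and `(s-1)⁻¹`. -/
def Salg : Subalgebra ℂ (RatFunc ℂ) :=
  Algebra.adjoin ℂ {RatFunc.X, RatFunc.X⁻¹, (RatFunc.X - 1)⁻¹}

/-- the element `s` of `S`. -/
def sS : Salg := ⟨RatFunc.X, Algebra.subset_adjoin (Set.mem_insert _ _)⟩

/-- the element `s⁻¹` of `S`. -/
def sInv : Salg :=
  ⟨RatFunc.X⁻¹, Algebra.subset_adjoin (Set.mem_insert_of_mem _ (Set.mem_insert _ _))⟩

/-- the element `(s-1)⁻¹` of `S`. -/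
def sm1Inv : Salg :=
  ⟨(RatFunc.X - 1)⁻¹,
    Algebra.subset_adjoin (Set.mem_insert_of_mem _ (Set.mem_insert_of_mem _ rfl))⟩

lemma Xne : (RatFunc.X : RatFunc ℂ) ≠ 0 := RatFunc.X_ne_zero
lemma Xm1ne : (RatFunc.X - 1 : RatFunc ℂ) ≠ 0 := by
  have h : (Polynomial.X - 1 : ℂ[X]) ≠ 0 := by
    simpa using Polynomial.X_sub_C_ne_zero (1 : ℂ)
  have := RatFunc.algebraMap_ne_zero h
  simpa [RatFunc.algebraMap_X] using this

/-- `s⁻¹` is inverse of `s` in Salg -/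
lemma sS_mul_sInv : sS * sInv = 1 := by
  apply Subtype.ext
  show (RatFunc.X * RatFunc.X⁻¹ : RatFunc ℂ) = 1
  exact mul_inv_cancel₀ Xne

lemma sm1_mul : (sS - 1) * sm1Inv = 1 := by
  apply Subtype.ext
  show ((RatFunc.X - 1) * (RatFunc.X - 1)⁻¹ : RatFunc ℂ) = 1
  exact mul_inv_cancel₀ Xm1ne

/-- w = s - 2 + s⁻¹ target of t -/
def wS : Salg := sS - 2 + sInv
def wS' : Salg := sS * sm1Inv ^ 2
def vS : Salg := sS - sInv

lemma wS_mul_wS' : wS * wS' = 1 := by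
  apply Subtype.ext
  show ((RatFunc.X - 2 + RatFunc.X⁻¹) * (RatFunc.X * ((RatFunc.X-1)⁻¹)^2) : RatFunc ℂ) = 1
  have h1 := Xne; have h2 := Xm1ne
  field_simp
  ring

/-- the unit w of Salg -/
def wU : Salgˣ := ⟨wS, wS', wS_mul_wS', by rw [mul_comm]; exact wS_mul_wS'⟩

/-- the algebra map LaurentPolynomial ℂ → Salg sending T 1 to w -/
def Phi : LaurentPolynomial ℂ →ₐ[ℂ] Salg :=
  AddMonoidAlgebra.lift ℂ Salg ℤ ((Units.coeHom Salg).comp (zpowersHom Salgˣ wU))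

lemma Phi_T (n : ℤ) : Phi (LaurentPolynomial.T n) = ((wU ^ n : Salgˣ) : Salg) := by
  have : LaurentPolynomial.T (R := ℂ) n = AddMonoidAlgebra.single n 1 := rfl
  rw [Phi, this, AddMonoidAlgebra.lift_single]
  simp [zpowersHom_apply]

lemma Phi_T_one : Phi (LaurentPolynomial.T 1) = wS := by
  rw [Phi_T]; simp [wU]

lemma vS_sq : vS ^ 2 = wS ^ 2 + 4 * wS := by
  apply Subtype.ext
  show ((RatFunc.X - RatFunc.X⁻¹)^2 : RatFunc ℂ)
    = (RatFunc.X - 2 + RatFunc.X⁻¹)^2 + 4 * (RatFunc.X - 2 + RatFunc.X⁻¹)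
  have h1 := Xne
  field_simp
  ring

lemma eval2_threePoly : threePoly.eval₂ (Phi.toRingHom) vS = 0 := by
  simp only [threePoly, Polynomial.eval₂_sub, Polynomial.eval₂_pow, Polynomial.eval₂_X,
    Polynomial.eval₂_C]
  have : Phi (LaurentPolynomial.T 2 + 4 * LaurentPolynomial.T 1)
      = wS ^ 2 + 4 * wS := by
    rw [map_add, map_mul, Phi_T, Phi_T_one, map_ofNat]
    have h2 : ((wU ^ (2:ℤ) : Salgˣ) : Salg) = wS ^ 2 := by
      rw [zpow_two, Units.val_mul, sq]; rfl
    rw [h2]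
  rw [show Phi.toRingHom (LaurentPolynomial.T 2 + 4 * LaurentPolynomial.T 1)
      = Phi (LaurentPolynomial.T 2 + 4 * LaurentPolynomial.T 1) from rfl, this, vS_sq]
  ring

/-- forward map -/
def Fhom : R3 →ₐ[ℂ] Salg :=
  { AdjoinRoot.lift Phi.toRingHom vS eval2_threePoly with
    commutes' := fun r => by
      have h : algebraMap ℂ R3 r
          = AdjoinRoot.of threePoly (algebraMap ℂ (LaurentPolynomial ℂ) r) := rfl
      show AdjoinRoot.lift _ _ _ (algebraMap ℂ R3 r) = algebraMap ℂ Salg r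
      rw [h, AdjoinRoot.lift_of]
      exact Phi.commutes r }

lemma Fhom_of (a : LaurentPolynomial ℂ) :
    Fhom (AdjoinRoot.of threePoly a) = Phi a := AdjoinRoot.lift_of eval2_threePoly

lemma Fhom_tR : Fhom tR = wS := by
  rw [tR, tp, Fhom_of, Phi_T_one]

lemma Fhom_tInv : Fhom tInv = wS' := by
  rw [tInv, tp, Fhom_of, Phi_T]
  have : (wU ^ (-1:ℤ) : Salgˣ) = wU⁻¹ := zpow_neg_one wU
  rw [this]; rfl

lemma Fhom_uR : Fhom uR = vS := AdjoinRoot.lift_root eval2_threePoly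

/-- candidate images under inverse -/
def aR : R3 := (2 : ℂ)⁻¹ • (tR + 2 + uR)
def bR : R3 := (2 : ℂ)⁻¹ • (tR + 2 - uR)
def cR : R3 := (2 : ℂ)⁻¹ • (tInv * uR - 1)

def halfR : R3 := algebraMap ℂ R3 (2:ℂ)⁻¹

lemma h2half : 2 * halfR = 1 := by
  rw [halfR, show (2:R3) = algebraMap ℂ R3 2 from (map_ofNat _ 2).symm, ← map_mul]
  norm_num

lemma husq : uR ^ 2 = tR ^ 2 + 4 * tR := by
  have h : AdjoinRoot.mk threePoly
      (Polynomial.X ^ 2 - Polynomial.C (LaurentPolynomial.T 2 + 4 * LaurentPolynomial.T 1))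
      = 0 := AdjoinRoot.mk_self
  rw [map_sub, map_pow, AdjoinRoot.mk_X, AdjoinRoot.mk_C, sub_eq_zero] at h
  have hT2 : (LaurentPolynomial.T 2 : LaurentPolynomial ℂ)
      = LaurentPolynomial.T 1 * LaurentPolynomial.T 1 := by
    rw [← LaurentPolynomial.T_add]; norm_num
  rw [hT2, map_add, map_mul, map_mul, map_ofNat] at h
  rw [uR, h]
  show tR * tR + 4 * tR = tR ^ 2 + 4 * tR
  ring

lemma htt : tInv * tR = 1 := by
  rw [tInv, tR, tp, tp, ← map_mul, ← LaurentPolynomial.T_add]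
  norm_num [LaurentPolynomial.T_zero]

lemma smul_as_half (x : R3) : (2:ℂ)⁻¹ • x = halfR * x := by
  rw [Algebra.smul_def, halfR]

lemma haB : aR * bR = 1 := by
  rw [aR, bR, smul_as_half, smul_as_half]
  linear_combination (-(halfR^2)) * husq + (halfR * (tR + 2) * (tR+2) * 0 + (2*halfR+1)) * h2half
lemma hAm1c : (aR - 1) * cR = 1 := by
  rw [aR, cR, smul_as_half, smul_as_half]
  linear_combination (halfR^2 * tInv) * husq + (halfR^2*(uR + tR + 4)) * htt
    + (halfR*tInv*uR + halfR + 1) * h2half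
lemma haw : aR - 2 + bR = tR := by
  rw [aR, bR, smul_as_half, smul_as_half]
  linear_combination (tR + 2) * h2half
lemma hav : aR - bR = uR := by
  rw [aR, bR, smul_as_half, smul_as_half]
  linear_combination uR * h2half

def Dpoly : ℂ[X] := Polynomial.X * (Polynomial.X - 1)

instance instPolyAlgSalg : Algebra ℂ[X] Salg := (Polynomial.aeval sS).toRingHom.toAlgebra

lemma algMap_eq (p : ℂ[X]) : algebraMap ℂ[X] Salg p = Polynomial.aeval sS p := rfl

lemma coe_algMap (p : ℂ[X]) :
    ((algebraMap ℂ[X] Salg p : Salg) : RatFunc ℂ) = Polynomial.aeval RatFunc.X p := by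
  rw [algMap_eq]
  have := Polynomial.aeval_algHom_apply Salg.val sS p
  exact this.symm

lemma aevalX_eq (p : ℂ[X]) :
    Polynomial.aeval (RatFunc.X : RatFunc ℂ) p = algebraMap ℂ[X] (RatFunc ℂ) p := by
  have h : (Polynomial.aeval (RatFunc.X : RatFunc ℂ) : ℂ[X] →ₐ[ℂ] RatFunc ℂ)
      = IsScalarTower.toAlgHom ℂ ℂ[X] (RatFunc ℂ) := by
    apply Polynomial.algHom_ext
    simp [RatFunc.algebraMap_X]
  exact DFunLike.congr_fun h p

lemma Salg_key (r : RatFunc ℂ) (hr : r ∈ Salg) : ∃ (p : ℂ[X]) (n : ℕ),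
    r * (RatFunc.X * (RatFunc.X - 1)) ^ n = Polynomial.aeval RatFunc.X p := by
  induction hr using Algebra.adjoin_induction with
  | mem x hx =>
    rcases hx with h | h | h
    · exact ⟨Polynomial.X, 0, by simp [h]⟩
    · refine ⟨Polynomial.X - 1, 1, ?_⟩
      subst h
      have h1 := Xne
      simp only [pow_one, map_sub, Polynomial.aeval_X, map_one]
      field_simp
    · refine ⟨Polynomial.X, 1, ?_⟩
      subst h
      have h2 := Xm1ne
      simp only [pow_one, Polynomial.aeval_X]
      field_simp
  | algebraMap r => exact ⟨Polynomial.C r, 0, by simp⟩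
  | add x y hx hy ihx ihy =>
    obtain ⟨p1, n1, h1⟩ := ihx
    obtain ⟨p2, n2, h2⟩ := ihy
    refine ⟨p1 * Dpoly ^ n2 + p2 * Dpoly ^ n1, n1 + n2, ?_⟩
    have hD : Polynomial.aeval (RatFunc.X : RatFunc ℂ) Dpoly
        = RatFunc.X * (RatFunc.X - 1) := by simp [Dpoly]
    simp only [map_add, map_mul, map_pow, hD]
    rw [pow_add]
    linear_combination ((RatFunc.X * (RatFunc.X - 1))^n2) * h1
      + ((RatFunc.X * (RatFunc.X - 1))^n1) * h2
  | mul x y hx hy ihx ihy =>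
    obtain ⟨p1, n1, h1⟩ := ihx
    obtain ⟨p2, n2, h2⟩ := ihy
    refine ⟨p1 * p2, n1 + n2, ?_⟩
    have hD : Polynomial.aeval (RatFunc.X : RatFunc ℂ) Dpoly
        = RatFunc.X * (RatFunc.X - 1) := by simp [Dpoly]
    simp only [map_mul]
    rw [pow_add]
    linear_combination (y * (RatFunc.X * (RatFunc.X - 1))^n2) * h1
      + (Polynomial.aeval (RatFunc.X : RatFunc ℂ) p1) * h2

lemma sSsm1_unit : (sS * (sS - 1)) * (sInv * sm1Inv) = 1 := by
  have h1 := sS_mul_sInv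
  have h2 := sm1_mul
  calc (sS * (sS - 1)) * (sInv * sm1Inv) = (sS * sInv) * ((sS - 1) * sm1Inv) := by ring
  _ = 1 := by rw [h1, h2, mul_one]

lemma aeval_D : Polynomial.aeval sS Dpoly = sS * (sS - 1) := by simp [Dpoly]

instance instLoc : IsLocalization (Submonoid.powers Dpoly) Salg := by
  refine ⟨?_, ?_, ?_⟩
  · rintro ⟨y, n, rfl⟩
    rw [algMap_eq, map_pow, aeval_D]
    exact (IsUnit.of_mul_eq_one _ sSsm1_unit).pow n
  · intro z
    obtain ⟨p, n, h⟩ := Salg_key z.1 z.2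
    refine ⟨(p, ⟨Dpoly ^ n, n, rfl⟩), ?_⟩
    apply Subtype.ext
    push_cast [coe_algMap]
    have hD : Polynomial.aeval (RatFunc.X : RatFunc ℂ) Dpoly
        = RatFunc.X * (RatFunc.X - 1) := by simp [Dpoly]
    rw [hD]
    exact h
  · intro x y h
    refine ⟨1, ?_⟩
    have hx := congrArg (Subtype.val) h
    rw [coe_algMap, coe_algMap, aevalX_eq, aevalX_eq] at hx
    have := IsFractionRing.injective ℂ[X] (RatFunc ℂ) hx
    rw [this]

lemma aRm1_unit : (aR * (aR - 1)) * (bR * cR) = 1 := by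
  calc (aR * (aR - 1)) * (bR * cR) = (aR * bR) * ((aR - 1) * cR) := by ring
  _ = 1 := by rw [haB, hAm1c, mul_one]

lemma hg_units : ∀ y : Submonoid.powers Dpoly,
    IsUnit ((Polynomial.aeval aR).toRingHom (y : ℂ[X])) := by
  rintro ⟨y, n, rfl⟩
  have : (Polynomial.aeval aR).toRingHom (Dpoly ^ n) = (aR * (aR - 1)) ^ n := by
    simp [Dpoly]
  rw [this]
  exact (IsUnit.of_mul_eq_one _ aRm1_unit).pow n

def Ghom0 : Salg →+* R3 :=
  IsLocalization.lift (M := Submonoid.powers Dpoly) (S := Salg) hg_units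

lemma Ghom0_alg (p : ℂ[X]) : Ghom0 (algebraMap ℂ[X] Salg p) = Polynomial.aeval aR p :=
  IsLocalization.lift_eq hg_units p

def Ghom : Salg →ₐ[ℂ] R3 :=
  { Ghom0 with
    commutes' := fun r => by
      have h : algebraMap ℂ Salg r = algebraMap ℂ[X] Salg (Polynomial.C r) := by
        rw [algMap_eq, Polynomial.aeval_C]
      show Ghom0 (algebraMap ℂ Salg r) = algebraMap ℂ R3 r
      rw [h, Ghom0_alg, Polynomial.aeval_C] }

lemma Ghom_sS : Ghom sS = aR := by
  have h : sS = algebraMap ℂ[X] Salg Polynomial.X := by rw [algMap_eq, Polynomial.aeval_X]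
  show Ghom0 sS = aR
  rw [h, Ghom0_alg, Polynomial.aeval_X]

lemma inv_uniq {M : Type*} [CommMonoid M] {x y z : M} (h1 : x * y = 1) (h2 : x * z = 1) :
    y = z :=
  left_inv_eq_right_inv (by rw [mul_comm]; exact h1) h2

lemma Ghom_sInv : Ghom sInv = bR := by
  have h1 : aR * Ghom sInv = 1 := by
    rw [← Ghom_sS, ← map_mul, sS_mul_sInv, map_one]
  exact inv_uniq h1 haB

lemma Ghom_sm1Inv : Ghom sm1Inv = cR := by
  have h1 : (aR - 1) * Ghom sm1Inv = 1 := by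
    rw [← Ghom_sS, show (1:R3) = Ghom 1 from (map_one Ghom).symm, ← map_sub, ← map_mul,
      sm1_mul, map_one]
  exact inv_uniq h1 hAm1c

lemma Ghom_wS : Ghom wS = tR := by
  rw [wS, map_add, map_sub, Ghom_sS, Ghom_sInv, map_ofNat, haw]

lemma Ghom_wS' : Ghom wS' = tInv := by
  have h1 : tR * Ghom wS' = 1 := by
    rw [← Ghom_wS, ← map_mul, wS_mul_wS', map_one]
  have h2 : tR * tInv = 1 := by rw [mul_comm]; exact htt
  exact inv_uniq h1 h2

lemma Ghom_vS : Ghom vS = uR := by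
  rw [vS, map_sub, Ghom_sS, Ghom_sInv, hav]

lemma two_neR : (2:RatFunc ℂ) ≠ 0 := by
  intro h
  have h2 : algebraMap ℂ (RatFunc ℂ) 2 = algebraMap ℂ (RatFunc ℂ) 0 := by
    rw [map_ofNat, map_zero, h]
  have := (algebraMap ℂ (RatFunc ℂ)).injective h2
  norm_num at this

lemma Fhom_aR : Fhom aR = sS := by
  rw [aR, map_smul, map_add, map_add, map_ofNat, Fhom_tR, Fhom_uR]
  apply Subtype.ext
  show (2:ℂ)⁻¹ • ((RatFunc.X - 2 + RatFunc.X⁻¹) + 2 + (RatFunc.X - RatFunc.X⁻¹)) = RatFunc.X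
  rw [Algebra.smul_def, map_inv₀, map_ofNat]
  have h1 := Xne
  have h0 := two_neR
  field_simp
  ring

lemma Fhom_bR : Fhom bR = sInv := by
  rw [bR, map_smul, map_sub, map_add, map_ofNat, Fhom_tR, Fhom_uR]
  apply Subtype.ext
  show (2:ℂ)⁻¹ • ((RatFunc.X - 2 + RatFunc.X⁻¹) + 2 - (RatFunc.X - RatFunc.X⁻¹)) = RatFunc.X⁻¹
  rw [Algebra.smul_def, map_inv₀, map_ofNat]
  have h1 := Xne
  have h0 := two_neR
  field_simp
  ring

lemma Fhom_cR : Fhom cR = sm1Inv := by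
  rw [cR, map_smul, map_sub, map_mul, map_one, Fhom_tInv, Fhom_uR]
  apply Subtype.ext
  show (2:ℂ)⁻¹ • ((RatFunc.X * ((RatFunc.X - 1)⁻¹)^2) * (RatFunc.X - RatFunc.X⁻¹) - 1)
      = (RatFunc.X - 1)⁻¹
  rw [Algebra.smul_def, map_inv₀, map_ofNat]
  have h1 := Xne
  have h2 := Xm1ne
  have h0 := two_neR
  field_simp
  ring

lemma FG : Fhom.comp Ghom = AlgHom.id ℂ Salg := by
  have h : (Fhom.comp Ghom).toRingHom = (AlgHom.id ℂ Salg).toRingHom := by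
    apply IsLocalization.ringHom_ext (Submonoid.powers Dpoly)
    apply Polynomial.ringHom_ext
    · intro a
      have h1 : algebraMap ℂ[X] Salg (Polynomial.C a) = algebraMap ℂ Salg a := by
        rw [algMap_eq, Polynomial.aeval_C]
      show Fhom (Ghom (algebraMap ℂ[X] Salg (Polynomial.C a)))
          = algebraMap ℂ[X] Salg (Polynomial.C a)
      rw [h1, AlgHom.commutes, AlgHom.commutes]
    · have h1 : algebraMap ℂ[X] Salg Polynomial.X = sS := by
        rw [algMap_eq, Polynomial.aeval_X]
      show Fhom (Ghom (algebraMap ℂ[X] Salg Polynomial.X))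
          = algebraMap ℂ[X] Salg Polynomial.X
      rw [h1, Ghom_sS, Fhom_aR]
  exact AlgHom.ext fun x => RingHom.congr_fun h x

lemma HtR : Ghom (Fhom tR) = tR := by rw [Fhom_tR, Ghom_wS]
lemma HtInv : Ghom (Fhom tInv) = tInv := by rw [Fhom_tInv, Ghom_wS']
lemma HuR : Ghom (Fhom uR) = uR := by rw [Fhom_uR, Ghom_vS]

lemma HT : ∀ n : ℤ, Ghom (Fhom (tp n)) = tp n := by
  intro n
  induction n using Int.induction_on with
  | zero =>
    show Ghom (Fhom (AdjoinRoot.of threePoly (LaurentPolynomial.T 0))) = _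
    rw [LaurentPolynomial.T_zero, map_one, map_one, map_one, tp, LaurentPolynomial.T_zero, map_one]
  | succ k ih =>
    have h : tp (k+1) = tp k * tR := by
      rw [tp, tp, tR, tp, ← map_mul, ← LaurentPolynomial.T_add]
    rw [h, map_mul, map_mul, ih, HtR]
  | pred k ih =>
    have h : tp (-k-1) = tp (-k) * tInv := by
      rw [tp, tp, tInv, tp, ← map_mul, ← LaurentPolynomial.T_sub]
    rw [h, map_mul, map_mul, ih, HtInv]

lemma Hof : ∀ a : LaurentPolynomial ℂ,
    Ghom (Fhom (AdjoinRoot.of threePoly a)) = AdjoinRoot.of threePoly a := by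
  intro a
  induction a using LaurentPolynomial.induction_on' with
  | add p q hp hq => rw [map_add, map_add, map_add, hp, hq]
  | C_mul_T n a =>
    rw [map_mul, map_mul, map_mul]
    have hC : Ghom (Fhom (AdjoinRoot.of threePoly (LaurentPolynomial.C a)))
        = AdjoinRoot.of threePoly (LaurentPolynomial.C a) := by
      have h : AdjoinRoot.of threePoly (LaurentPolynomial.C a) = algebraMap ℂ R3 a := rfl
      rw [h, AlgHom.commutes, AlgHom.commutes]
    rw [hC]
    have := HT n
    rw [tp] at this
    rw [this]

lemma GF_elem : ∀ x : R3, Ghom (Fhom x) = x := by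
  intro x
  obtain ⟨p, rfl⟩ := AdjoinRoot.mk_surjective x
  induction p using Polynomial.induction_on' with
  | add p q hp hq => rw [map_add, map_add, map_add, hp, hq]
  | monomial n a =>
    rw [← Polynomial.C_mul_X_pow_eq_monomial, map_mul, map_pow, AdjoinRoot.mk_C, AdjoinRoot.mk_X,
      map_mul, map_mul, map_pow, map_pow, Hof,
      show AdjoinRoot.root threePoly = uR from rfl, HuR]

lemma GF : Ghom.comp Fhom = AlgHom.id ℂ R3 := AlgHom.ext fun x => GF_elem x

def eIso : R3 ≃ₐ[ℂ] Salg := AlgEquiv.ofAlgHom Fhom Ghom FG GF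

lemma eIso_apply (x : R3) : eIso x = Fhom x := rfl
lemma eIso_symm_apply (y : Salg) : eIso.symm y = Ghom y := rfl


/-- The map sending `t ↦ s⁻¹(s-1)² = s - 2 + s⁻¹` and `u ↦ s - s⁻¹` extends to a well-defined
isomorphism of `ℂ`-algebras from `R` to `S`, whose inverse `φ` satisfies
`φ(s) = (t + 2 + u)/2`, `φ(s⁻¹) = (t + 2 - u)/2` and `φ((s-1)⁻¹) = (t⁻¹u - 1)/2`. -/
theorem stmt_0 :
    ∃ e : R3 ≃ₐ[ℂ] Salg,
      e tR = sS - 2 + sInv ∧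
      e uR = sS - sInv ∧
      e.symm sS = (2 : ℂ)⁻¹ • (tR + 2 + uR) ∧
      e.symm sInv = (2 : ℂ)⁻¹ • (tR + 2 - uR) ∧
      e.symm sm1Inv = (2 : ℂ)⁻¹ • (tInv * uR - 1) := by
  refine ⟨eIso, ?_, ?_, ?_, ?_, ?_⟩
  · exact Fhom_tR
  · exact Fhom_uR
  · exact Ghom_sS
  · exact Ghom_sInv
  · exact Ghom_sm1Inv


end
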